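/- Let d ≥ 1 and μ : Fin d → ℝ. Let Q σ be the pushforward of the product measure ⨂_{i} gaussianReal (μ i) (σ²) on Fin d → ℝ under the componentwise quotient map (Fin d → ℝ) → (Fin d → AddCircle 1). Then, as σ → ∞, Q σ converges weakly to the product of Haar probability measures on Fin d → AddCircle 1 (the uniform distribution on the d-dimensional torus). -/

import Mathlib

open MeasureTheory ProbabilityTheory Filter Topology

/-- The wrapped product Gaussian probability measure on the `d`-dimensional torus, obtained by
pushing forward the product of Gaussians `N(μ i, σ²)` under the componentwise quotient map. -/
noncomputable def wrappedGaussianTorus (d : ℕ) (μ : Fin d → ℝ) (σ : ℝ) :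
    ProbabilityMeasure (Fin d → AddCircle (1 : ℝ)) :=
  ProbabilityMeasure.map
    ⟨Measure.pi (fun i => gaussianReal (μ i) (⟨σ ^ 2, sq_nonneg σ⟩ : NNReal)),
      @Measure.pi.instIsProbabilityMeasure _ _ _ _ _ (fun _ => instIsProbabilityMeasureGaussianReal _ _)⟩
    (f := fun x : Fin d → ℝ => fun i => (x i : AddCircle (1 : ℝ)))
    (by
      refine Measurable.aemeasurable ?_
      exact measurable_pi_lambda _ fun i =>
        (AddCircle.continuous_mk' 1).measurable.comp (measurable_pi_apply i))

/-- The uniform probability measure on the `d`-dimensional torus: the product of Haar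
probability measures on the circle `ℝ/ℤ`. -/
noncomputable def uniformTorus (d : ℕ) : ProbabilityMeasure (Fin d → AddCircle (1 : ℝ)) :=
  ⟨Measure.pi (fun _ : Fin d => (volume : Measure (AddCircle (1 : ℝ)))), by
    haveI : ∀ _i : Fin d, IsProbabilityMeasure (volume : Measure (AddCircle (1 : ℝ))) :=
      fun _ => ⟨by rw [AddCircle.measure_univ]; simp⟩
    infer_instance⟩

open Complex Submodule
open scoped Real NNReal ENNReal

noncomputable section

instance fact_one_pos : Fact ((0:ℝ) < 1) := ⟨one_pos⟩

instance : IsProbabilityMeasure (volume : Measure (AddCircle (1:ℝ))) :=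
  ⟨by rw [AddCircle.measure_univ]; simp⟩

/-- characters of the torus -/
def torusChar (d : ℕ) (n : Fin d → ℤ) : C(Fin d → AddCircle (1:ℝ), ℂ) :=
  ∏ i : Fin d, (fourier (n i)).comp ⟨fun x => x i, continuous_apply i⟩

lemma torusChar_apply (d : ℕ) (n : Fin d → ℤ) (x : Fin d → AddCircle (1:ℝ)) :
    torusChar d n x = ∏ i, fourier (n i) (x i) := by
  simp [torusChar]

lemma torusChar_zero (d : ℕ) : torusChar d 0 = 1 := by
  ext x
  simp [torusChar_apply, fourier_zero]

lemma torusChar_add (d : ℕ) (m n : Fin d → ℤ) :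
    torusChar d (m + n) = torusChar d m * torusChar d n := by
  ext x
  simp [torusChar_apply, fourier_add, Finset.prod_mul_distrib]

lemma torusChar_star (d : ℕ) (n : Fin d → ℤ) :
    star (torusChar d n) = torusChar d (-n) := by
  ext x
  have h : (star (torusChar d n)) x = (starRingEnd ℂ) (torusChar d n x) := rfl
  rw [h, torusChar_apply, torusChar_apply, map_prod]
  exact Finset.prod_congr rfl fun i _ => (by simpa using (fourier_neg (n := n i) (x := x i)).symm)

/-- The star subalgebra generated by torus characters. -/
def torusSubalgebra (d : ℕ) : StarSubalgebra ℂ C(Fin d → AddCircle (1:ℝ), ℂ) where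
  toSubalgebra := Algebra.adjoin ℂ (Set.range (torusChar d))
  star_mem' := by
    show Algebra.adjoin ℂ (Set.range (torusChar d)) ≤
      star (Algebra.adjoin ℂ (Set.range (torusChar d)))
    refine Algebra.adjoin_le ?_
    rintro - ⟨n, rfl⟩
    exact Algebra.subset_adjoin ⟨-n, (torusChar_star d n).symm⟩

theorem torusSubalgebra_coe (d : ℕ) :
    Subalgebra.toSubmodule (torusSubalgebra d).toSubalgebra
      = span ℂ (Set.range (torusChar d)) := by
  apply Algebra.adjoin_eq_span_of_subset
  refine Set.Subset.trans ?_ Submodule.subset_span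
  intro x hx
  refine Submonoid.closure_induction (fun _ => id) ⟨0, torusChar_zero d⟩ ?_ hx
  rintro - - - - ⟨m, rfl⟩ ⟨n, rfl⟩
  exact ⟨m + n, torusChar_add d m n⟩

theorem torusSubalgebra_separatesPoints (d : ℕ) : (torusSubalgebra d).SeparatesPoints := by
  intro x y hxy
  obtain ⟨i, hi⟩ : ∃ i, x i ≠ y i := by
    by_contra h
    push_neg at h
    exact hxy (funext h)
  refine ⟨_, ⟨torusChar d (Pi.single i 1), Algebra.subset_adjoin ⟨Pi.single i 1, rfl⟩, rfl⟩, ?_⟩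
  have key : ∀ z : Fin d → AddCircle (1:ℝ), torusChar d (Pi.single i 1) z = fourier 1 (z i) := by
    intro z
    rw [torusChar_apply]
    refine Finset.prod_eq_single_of_mem i (Finset.mem_univ i) ?_ |>.trans ?_
    · intro j _ hj
      rw [Pi.single_eq_of_ne hj]
      exact fourier_zero
    · rw [Pi.single_eq_same]
  dsimp only
  rw [key, key, fourier_one, fourier_one]
  contrapose! hi
  rw [Circle.coe_inj] at hi
  exact AddCircle.injective_toCircle one_ne_zero hi

theorem torusSubalgebra_closure_eq_top (d : ℕ) :
    (torusSubalgebra d).topologicalClosure = ⊤ :=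
  ContinuousMap.starSubalgebra_topologicalClosure_eq_top_of_separatesPoints (torusSubalgebra d)
    (torusSubalgebra_separatesPoints d)

theorem span_torusChar_closure_eq_top (d : ℕ) :
    (span ℂ (Set.range (torusChar d))).topologicalClosure = ⊤ := by
  rw [← torusSubalgebra_coe]
  exact congr_arg (Subalgebra.toSubmodule <| StarSubalgebra.toSubalgebra ·)
    (torusSubalgebra_closure_eq_top d)

/-- integral of a character over the circle -/
theorem integral_fourier_circle (k : ℤ) :
    ∫ x : AddCircle (1:ℝ), fourier k x = (if k = 0 then 1 else 0 : ℂ) := by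
  split_ifs with hk
  · subst hk
    simp [fourier_zero]
  · have key : ∫ x : AddCircle (1:ℝ), fourier k x
        = ∫ x : AddCircle (1:ℝ), fourier k (x + (((1:ℝ)/2/(k:ℝ) : ℝ) : AddCircle (1:ℝ))) :=
      (integral_add_right_eq_self _ _).symm
    simp_rw [fourier_add_half_inv_index hk one_pos] at key
    rw [integral_neg] at key
    have h2 : (2:ℂ) * ∫ x : AddCircle (1:ℝ), fourier k x = 0 := by
      linear_combination key
    simpa using h2

theorem integral_cexp_gaussian0 {v : ℝ≥0} (hv : v ≠ 0) (t : ℝ) :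
    ∫ x : ℝ, Complex.exp (Complex.I * t * x) ∂(gaussianReal 0 v)
      = Complex.exp (-(t ^ 2 * v) / 2) := by
  have hv' : (0:ℝ) < v := lt_of_le_of_ne v.coe_nonneg (by exact_mod_cast hv.symm)
  have h2v : (0:ℝ) < 2 * π * v := by positivity
  rw [gaussianReal_of_var_ne_zero _ hv]
  have hpdf : gaussianPDF 0 v
      = fun x => ((Real.toNNReal (gaussianPDFReal 0 v x) : ℝ≥0) : ℝ≥0∞) := rfl
  rw [hpdf, integral_withDensity_eq_integral_smul
    ((measurable_gaussianPDFReal 0 v).real_toNNReal) _]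
  set b : ℂ := ((-(2*(v:ℝ))⁻¹ : ℝ) : ℂ) with hb
  have hbre : b.re < 0 := by
    rw [hb, Complex.ofReal_re]
    simp only [neg_neg, Left.neg_neg_iff]
    positivity
  have key : ∀ x : ℝ, (Real.toNNReal (gaussianPDFReal 0 v x) : ℝ≥0)
        • Complex.exp (Complex.I * t * x)
      = ((Real.sqrt (2*π*v))⁻¹ : ℂ) * Complex.exp (b*x^2 + (Complex.I*t)*x + 0) := by
    intro x
    rw [NNReal.smul_def, Real.coe_toNNReal _ (gaussianPDFReal_nonneg 0 v x)]
    rw [gaussianPDFReal_def]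
    push_cast
    rw [Complex.real_smul]
    push_cast
    rw [mul_assoc, ← Complex.exp_add]
    congr 1
    push_cast
    rw [hb]
    push_cast
    field_simp
    ring
  simp_rw [key]
  rw [MeasureTheory.integral_const_mul, integral_cexp_quadratic hbre]
  have hπb : (π : ℂ) / -b = ((2*π*(v:ℝ) : ℝ) : ℂ) := by
    rw [hb]
    push_cast
    rw [neg_neg]
    field_simp
  have hsq : (((2*π*(v:ℝ) : ℝ)) : ℂ) ^ (1/2 : ℂ) = ((Real.sqrt (2*π*v) : ℝ) : ℂ) := by
    rw [Real.sqrt_eq_rpow,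
      show ((1/2:ℂ)) = ((1/2:ℝ):ℂ) by norm_num, ← Complex.ofReal_cpow h2v.le]
  rw [hπb, hsq]
  have hvne : ((v:ℝ):ℂ) ≠ 0 := Complex.ofReal_ne_zero.mpr hv'.ne'
  have hexp : (0:ℂ) - (Complex.I*(t:ℂ))^2/(4*b) = -((t:ℂ)^2*((v:ℝ):ℂ))/2 := by
    have hI : (Complex.I*(t:ℂ))^2 = -((t:ℂ)^2) := by
      rw [mul_pow, Complex.I_sq]; ring
    rw [hI, hb]
    push_cast
    field_simp
    ring
  rw [hexp, ← mul_assoc,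
    inv_mul_cancel₀ (Complex.ofReal_ne_zero.mpr (Real.sqrt_ne_zero'.mpr h2v)), one_mul]

theorem integral_cexp_gaussian (μ0 t : ℝ) {v : ℝ≥0} (hv : v ≠ 0) :
    ∫ x : ℝ, Complex.exp (Complex.I * t * x) ∂(gaussianReal μ0 v)
      = Complex.exp (Complex.I * t * μ0 - t ^ 2 * v / 2) := by
  have hmap : gaussianReal μ0 v = (gaussianReal 0 v).map (· + μ0) := by
    rw [gaussianReal_map_add_const, zero_add]
  rw [hmap, integral_map (measurable_add_const μ0).aemeasurable
    (Continuous.aestronglyMeasurable (by continuity))]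
  have hstep : ∀ x : ℝ, Complex.exp (Complex.I * t * ((x + μ0 : ℝ) : ℂ))
      = Complex.exp (Complex.I * t * x) * Complex.exp (Complex.I * t * μ0) := by
    intro x
    rw [← Complex.exp_add]
    congr 1
    push_cast
    ring
  simp_rw [hstep]
  rw [MeasureTheory.integral_mul_const, integral_cexp_gaussian0 hv, ← Complex.exp_add]
  congr 1
  ring

theorem integral_fourier_wrapped (k : ℤ) (μ0 : ℝ) {v : ℝ≥0} (hv : v ≠ 0) :
    ∫ x : ℝ, fourier k ((x : ℝ) : AddCircle (1:ℝ)) ∂(gaussianReal μ0 v)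
      = Complex.exp (Complex.I * (2*π*k) * μ0 - (2*π*k) ^ 2 * v / 2) := by
  have h := integral_cexp_gaussian μ0 (2*π*k) hv
  push_cast at h
  rw [← h]
  refine integral_congr_ae (Filter.Eventually.of_forall fun x => ?_)
  show fourier k ((x : ℝ) : AddCircle (1:ℝ)) = _
  rw [fourier_coe_apply]
  congr 1
  push_cast
  ring

theorem uniformTorus_toMeasure (d : ℕ) :
    (uniformTorus d : Measure (Fin d → AddCircle (1:ℝ)))
      = Measure.pi (fun _ : Fin d => (volume : Measure (AddCircle (1:ℝ)))) := rfl

theorem integral_torusChar_uniform (d : ℕ) (n : Fin d → ℤ) :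
    ∫ x, torusChar d n x ∂(uniformTorus d : Measure (Fin d → AddCircle (1:ℝ)))
      = if n = 0 then 1 else 0 := by
  have hvol : (uniformTorus d : Measure (Fin d → AddCircle (1:ℝ)))
      = (volume : Measure (Fin d → AddCircle (1:ℝ))) := by
    rw [uniformTorus_toMeasure, MeasureTheory.volume_pi]
  rw [hvol]
  simp_rw [torusChar_apply]
  rw [MeasureTheory.integral_fintype_prod_volume_eq_prod
    (f := fun (i : Fin d) (x : AddCircle (1:ℝ)) => fourier (n i) x)]
  simp_rw [integral_fourier_circle]
  by_cases h : n = 0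
  · simp [h]
  · rw [if_neg h]
    obtain ⟨i, hi⟩ : ∃ i, n i ≠ 0 := by
      by_contra hc; push_neg at hc; exact h (funext hc)
    exact Finset.prod_eq_zero (Finset.mem_univ i) (if_neg hi)

theorem wrappedGaussianTorus_toMeasure (d : ℕ) (μ : Fin d → ℝ) (σ : ℝ) :
    (wrappedGaussianTorus d μ σ : Measure (Fin d → AddCircle (1:ℝ)))
      = (Measure.pi (fun i => gaussianReal (μ i) (⟨σ ^ 2, sq_nonneg σ⟩ : NNReal))).map
          (fun x : Fin d → ℝ => fun i => (x i : AddCircle (1:ℝ))) := rfl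

theorem integral_torusChar_wrapped (d : ℕ) (μ : Fin d → ℝ) {σ : ℝ} (hσ : σ ≠ 0)
    (n : Fin d → ℤ) :
    ∫ x, torusChar d n x ∂(wrappedGaussianTorus d μ σ : Measure (Fin d → AddCircle (1:ℝ)))
      = ∏ i, Complex.exp (Complex.I * (2*(π:ℂ)*(n i : ℂ)) * ((μ i : ℝ) : ℂ)
          - (2*(π:ℂ)*(n i : ℂ)) ^ 2 * ((σ : ℂ))^2 / 2) := by
  set v : ℝ≥0 := ⟨σ^2, sq_nonneg σ⟩ with hvdef
  have hvc : (v:ℝ) = σ^2 := rfl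
  have hv : v ≠ 0 := by
    intro hzero
    exact pow_ne_zero 2 hσ (by rw [← hvc, hzero, NNReal.coe_zero])
  have hq : Measurable (fun x : Fin d → ℝ => fun i => ((x i : ℝ) : AddCircle (1:ℝ))) :=
    measurable_pi_lambda _ fun i =>
      (AddCircle.continuous_mk' 1).measurable.comp (measurable_pi_apply i)
  rw [wrappedGaussianTorus_toMeasure]
  rw [integral_map hq.aemeasurable (map_continuous (torusChar d n)).aestronglyMeasurable]
  simp_rw [torusChar_apply]
  letI instMS : ∀ i : Fin d, MeasureSpace ((fun _ : Fin d => ℝ) i) :=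
    fun i => ⟨gaussianReal (μ i) v⟩
  haveI hsf : ∀ i : Fin d, SigmaFinite (@volume _ (instMS i)) := fun i => by
    show SigmaFinite (gaussianReal (μ i) v); infer_instance
  have hpi : Measure.pi (fun i => gaussianReal (μ i) v)
      = @volume _ (@MeasureTheory.MeasureSpace.pi (Fin d) _ (fun _ : Fin d => ℝ) instMS) := rfl
  rw [hpi]
  rw [@MeasureTheory.integral_fintype_prod_volume_eq_prod ℂ (Fin d) _ _ (fun _ : Fin d => ℝ)
    (fun i x => fourier (n i) ((x : ℝ) : AddCircle (1:ℝ))) instMS hsf]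
  refine Finset.prod_congr rfl fun i _ => ?_
  have h := integral_fourier_wrapped (n i) (μ i) hv
  rw [hvc] at h
  push_cast at h ⊢
  exact h

theorem tendsto_integral_torusChar (d : ℕ) (μ : Fin d → ℝ) (n : Fin d → ℤ) :
    Tendsto (fun σ : ℝ => ∫ x, torusChar d n x
        ∂(wrappedGaussianTorus d μ σ : Measure (Fin d → AddCircle (1:ℝ)))) atTop
      (𝓝 (∫ x, torusChar d n x ∂(uniformTorus d : Measure (Fin d → AddCircle (1:ℝ))))) := by
  rw [integral_torusChar_uniform]
  have hcong : (fun σ : ℝ => ∫ x, torusChar d n x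
        ∂(wrappedGaussianTorus d μ σ : Measure (Fin d → AddCircle (1:ℝ))))
      =ᶠ[atTop] fun σ : ℝ => ∏ i, Complex.exp (Complex.I * (2*(π:ℂ)*(n i : ℂ))
          * ((μ i : ℝ) : ℂ) - (2*(π:ℂ)*(n i : ℂ)) ^ 2 * ((σ : ℂ))^2 / 2) := by
    filter_upwards [eventually_gt_atTop (0:ℝ)] with σ hσ
    exact integral_torusChar_wrapped d μ hσ.ne' n
  rw [tendsto_congr' hcong]
  by_cases h : n = 0
  · subst h
    simp only [Pi.zero_apply, Int.cast_zero, mul_zero, zero_mul, ne_eq,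
      OfNat.ofNat_ne_zero, not_false_eq_true, zero_pow, zero_div, sub_zero, zero_sub]
    simp [Complex.exp_zero]
  · rw [if_neg h]
    obtain ⟨i0, hi0⟩ : ∃ i, n i ≠ 0 := by
      by_contra hc; push_neg at hc; exact h (funext hc)
    have key : ∀ i : Fin d, Tendsto (fun σ : ℝ => Complex.exp (Complex.I * (2*(π:ℂ)*(n i : ℂ))
          * ((μ i : ℝ) : ℂ) - (2*(π:ℂ)*(n i : ℂ)) ^ 2 * ((σ : ℂ))^2 / 2)) atTop
        (𝓝 (if n i = 0 then 1 else 0)) := by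
      intro i
      by_cases hni : n i = 0
      · simp [hni]
      · rw [if_neg hni]
        rw [tendsto_zero_iff_norm_tendsto_zero]
        have hnorm : ∀ σ : ℝ, ‖Complex.exp (Complex.I * (2*(π:ℂ)*(n i : ℂ))
            * ((μ i : ℝ) : ℂ) - (2*(π:ℂ)*(n i : ℂ)) ^ 2 * ((σ : ℂ))^2 / 2)‖
            = Real.exp (-((2*π*(n i))^2/2) * σ^2) := by
          intro σ
          rw [Complex.norm_exp]
          congr 1
          have : Complex.I * (2*(π:ℂ)*(n i : ℂ)) * ((μ i : ℝ) : ℂ)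
              - (2*(π:ℂ)*(n i : ℂ)) ^ 2 * ((σ : ℂ))^2 / 2
              = ((2*π*(n i)*(μ i) : ℝ) : ℂ) * Complex.I
                - (((2*π*(n i))^2*σ^2/2 : ℝ) : ℂ) := by
            push_cast
            ring
          rw [this]
          have hre : ∀ a b : ℝ, ((a:ℂ) * Complex.I - (b:ℂ)).re = -b := by
            intro a b; simp
          rw [hre]
          ring
        simp_rw [hnorm]
        have hc : (0:ℝ) < (2*π*(n i))^2/2 := by
          have : (2*π*(n i)) ≠ 0 := by
            have : (n i : ℝ) ≠ 0 := Int.cast_ne_zero.mpr hni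
            positivity
          positivity
        have h1 : Tendsto (fun σ : ℝ => (2*π*(n i))^2/2 * σ^2) atTop atTop :=
          (tendsto_pow_atTop (two_ne_zero)).const_mul_atTop hc
        have h2 : Tendsto (fun σ : ℝ => -((2*π*(n i))^2/2) * σ^2) atTop atBot := by
          have : (fun σ : ℝ => -((2*π*(n i))^2/2) * σ^2)
              = fun σ : ℝ => -((2*π*(n i))^2/2 * σ^2) := by
            funext σ; ring
          rw [this]
          exact tendsto_neg_atTop_atBot.comp h1
        exact Real.tendsto_exp_atBot.comp h2
    have hprod := tendsto_finset_prod (Finset.univ : Finset (Fin d)) (fun i _ => key i)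
    have hzero : (∏ c : Fin d, (if n c = 0 then 1 else 0 : ℂ)) = 0 :=
      Finset.prod_eq_zero (Finset.mem_univ i0) (by simp [hi0])
    rw [← hzero]
    exact hprod

lemma integrable_cm {X : Type*} [TopologicalSpace X] [CompactSpace X] [MeasurableSpace X]
    [OpensMeasurableSpace X] (ν : Measure X) [IsFiniteMeasure ν] (g : C(X, ℂ)) :
    Integrable g ν := by
  refine (map_continuous g).integrable_of_hasCompactSupport ?_
  exact HasCompactSupport.of_compactSpace _

theorem tendsto_integral_span (d : ℕ) (μ : Fin d → ℝ)
    {g : C(Fin d → AddCircle (1:ℝ), ℂ)} (hg : g ∈ span ℂ (Set.range (torusChar d))) :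
    Tendsto (fun σ : ℝ => ∫ x, g x
        ∂(wrappedGaussianTorus d μ σ : Measure (Fin d → AddCircle (1:ℝ)))) atTop
      (𝓝 (∫ x, g x ∂(uniformTorus d : Measure (Fin d → AddCircle (1:ℝ))))) := by
  induction hg using Submodule.span_induction with
  | mem p hp =>
    obtain ⟨n, rfl⟩ := hp
    exact tendsto_integral_torusChar d μ n
  | zero =>
    simp only [ContinuousMap.zero_apply, integral_zero]
    exact tendsto_const_nhds
  | add p q hp hq ihp ihq =>
    have key : ∀ ν : Measure (Fin d → AddCircle (1:ℝ)), IsFiniteMeasure ν →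
        ∫ x, (p + q) x ∂ν = (∫ x, p x ∂ν) + ∫ x, q x ∂ν := by
      intro ν hν
      simp only [ContinuousMap.add_apply]
      exact integral_add (integrable_cm ν p) (integrable_cm ν q)
    have e1 : (fun σ : ℝ => ∫ x, (p + q) x
        ∂(wrappedGaussianTorus d μ σ : Measure (Fin d → AddCircle (1:ℝ))))
        = fun σ : ℝ => (∫ x, p x ∂(wrappedGaussianTorus d μ σ :
            Measure (Fin d → AddCircle (1:ℝ))))
          + ∫ x, q x ∂(wrappedGaussianTorus d μ σ : Measure (Fin d → AddCircle (1:ℝ))) :=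
      funext fun σ => key _ inferInstance
    rw [e1, key _ inferInstance]
    exact ihp.add ihq
  | smul a p hp ihp =>
    have key : ∀ ν : Measure (Fin d → AddCircle (1:ℝ)), IsFiniteMeasure ν →
        ∫ x, (a • p) x ∂ν = a • ∫ x, p x ∂ν := by
      intro ν hν
      simp only [ContinuousMap.smul_apply]
      exact integral_smul a _
    have e1 : (fun σ : ℝ => ∫ x, (a • p) x
        ∂(wrappedGaussianTorus d μ σ : Measure (Fin d → AddCircle (1:ℝ))))
        = fun σ : ℝ => a • ∫ x, p x ∂(wrappedGaussianTorus d μ σ :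
            Measure (Fin d → AddCircle (1:ℝ))) :=
      funext fun σ => key _ inferInstance
    rw [e1, key _ inferInstance]
    exact ihp.const_smul a

theorem tendsto_integral_cm (d : ℕ) (μ : Fin d → ℝ) (g : C(Fin d → AddCircle (1:ℝ), ℂ)) :
    Tendsto (fun σ : ℝ => ∫ x, g x
        ∂(wrappedGaussianTorus d μ σ : Measure (Fin d → AddCircle (1:ℝ)))) atTop
      (𝓝 (∫ x, g x ∂(uniformTorus d : Measure (Fin d → AddCircle (1:ℝ))))) := by
  have hdist : ∀ (ν : Measure (Fin d → AddCircle (1:ℝ))), IsProbabilityMeasure ν →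
      ∀ p : C(Fin d → AddCircle (1:ℝ), ℂ),
      dist (∫ x, g x ∂ν) (∫ x, p x ∂ν) ≤ dist g p := by
    intro ν hν p
    rw [dist_eq_norm, ← integral_sub (integrable_cm ν g) (integrable_cm ν p)]
    calc ‖∫ x, (g x - p x) ∂ν‖ ≤ dist g p * (ν Set.univ).toReal := by
          refine norm_integral_le_of_norm_le_const (Filter.Eventually.of_forall fun x => ?_)
          rw [← dist_eq_norm]
          exact ContinuousMap.dist_apply_le_dist x
      _ = dist g p := by rw [measure_univ]; simp
  have hg : g ∈ closure ((span ℂ (Set.range (torusChar d)) :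
      Submodule ℂ C(Fin d → AddCircle (1:ℝ), ℂ)) : Set C(Fin d → AddCircle (1:ℝ), ℂ)) := by
    have := span_torusChar_closure_eq_top d
    rw [← Submodule.topologicalClosure_coe, this]
    trivial
  refine Metric.tendsto_atTop.mpr fun ε hε => ?_
  obtain ⟨p, hp_mem, hp_close⟩ := Metric.mem_closure_iff.mp hg (ε/4) (by positivity)
  obtain ⟨N, hN⟩ := Metric.tendsto_atTop.mp (tendsto_integral_span d μ hp_mem) (ε/4)
    (by positivity)
  refine ⟨N, fun σ hσ => ?_⟩
  have h1 := hdist (wrappedGaussianTorus d μ σ : Measure _) (by infer_instance) p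
  have h2 := hdist (uniformTorus d : Measure _) (by infer_instance) p
  have h3 := hN σ hσ
  calc dist (∫ x, g x ∂(wrappedGaussianTorus d μ σ : Measure _))
        (∫ x, g x ∂(uniformTorus d : Measure _))
      ≤ dist (∫ x, g x ∂(wrappedGaussianTorus d μ σ : Measure _))
          (∫ x, p x ∂(wrappedGaussianTorus d μ σ : Measure _))
        + dist (∫ x, p x ∂(wrappedGaussianTorus d μ σ : Measure _))
            (∫ x, p x ∂(uniformTorus d : Measure _))
        + dist (∫ x, p x ∂(uniformTorus d : Measure _))
            (∫ x, g x ∂(uniformTorus d : Measure _)) := dist_triangle4 _ _ _ _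
    _ < ε := by
        have hb1 : dist (∫ x, g x ∂(wrappedGaussianTorus d μ σ : Measure _))
            (∫ x, p x ∂(wrappedGaussianTorus d μ σ : Measure _)) < ε/4 :=
          lt_of_le_of_lt h1 hp_close
        have hb2 : dist (∫ x, p x ∂(uniformTorus d : Measure _))
            (∫ x, g x ∂(uniformTorus d : Measure _)) < ε/4 := by
          rw [dist_comm]
          exact lt_of_le_of_lt h2 hp_close
        linarith

theorem wrappedGaussianTorus_tendsto_uniform' (d : ℕ) (μ : Fin d → ℝ) :
    Tendsto (wrappedGaussianTorus d μ) atTop (𝓝 (uniformTorus d)) := by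
  rw [MeasureTheory.ProbabilityMeasure.tendsto_iff_forall_integral_tendsto]
  intro f
  let g : C(Fin d → AddCircle (1:ℝ), ℂ) :=
    ⟨fun x => ((f x : ℝ) : ℂ), Complex.continuous_ofReal.comp f.continuous⟩
  have h := tendsto_integral_cm d μ g
  have key : ∀ ν : Measure (Fin d → AddCircle (1:ℝ)),
      ∫ x, g x ∂ν = ((∫ x, f x ∂ν : ℝ) : ℂ) := by
    intro ν
    exact integral_ofReal
  simp_rw [key] at h
  have := (Complex.continuous_re.tendsto _).comp h
  simpa [Function.comp_def] using this

end


/-- The wrapped product Gaussian distribution on the `d`-dimensional torus converges weakly to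
the uniform distribution (product of Haar probability measures) as `σ → ∞`. -/
theorem wrappedGaussianTorus_tendsto_uniform (d : ℕ) (hd : 1 ≤ d) (μ : Fin d → ℝ) :
    Tendsto (wrappedGaussianTorus d μ) atTop (𝓝 (uniformTorus d)) :=
  wrappedGaussianTorus_tendsto_uniform' d μ
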